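/- Exact expected generalization error for Gaussian mean estimation by sample averaging: Let Z_1, ..., Z_m be i.i.d. d-dimensional Gaussian random vectors with distribution N(μ, σ²I_d) for σ > 0, let the loss be ℓ(w, z) = ‖w − z‖₂², and let the algorithm output the sample mean W = (1/m) Σ_{j=1}^m Z_j. Then the expected generalization error equals E[ L(W) − (1/m) Σ_{j=1}^m ℓ(W, Z_j) ] = 2σ²d/m. In particular, in the distributed setting with K nodes each averaging n local samples and the aggregate being the average of the node averages (equivalently the mean of all m = nK samples), the expected generalization error is 2σ²d/(nK). -/

import Mathlib

open MeasureTheory ProbabilityTheory Real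
open scoped ENNReal NNReal

namespace GaussGen

lemma integral_gaussianReal_eq (μ : ℝ) {v : ℝ≥0} (hv : v ≠ 0) (f : ℝ → ℝ) :
    ∫ x, f x ∂gaussianReal μ v = ∫ x, gaussianPDFReal μ v x * f x := by
  rw [gaussianReal_of_var_ne_zero μ hv]
  have hm : Measurable fun x => (gaussianPDFReal μ v x).toNNReal :=
    (measurable_gaussianPDFReal μ v).real_toNNReal
  have h2 : volume.withDensity (gaussianPDF μ v)
      = volume.withDensity (fun x => ((gaussianPDFReal μ v x).toNNReal : ℝ≥0∞)) := rfl
  rw [h2, integral_withDensity_eq_integral_smul hm]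
  congr 1; ext x
  rw [NNReal.smul_def, smul_eq_mul, Real.coe_toNNReal _ (gaussianPDFReal_nonneg μ v x)]

lemma integrable_gaussianReal_iff (μ : ℝ) {v : ℝ≥0} (hv : v ≠ 0) (f : ℝ → ℝ) :
    Integrable f (gaussianReal μ v) ↔ Integrable (fun x => gaussianPDFReal μ v x * f x) volume := by
  rw [gaussianReal_of_var_ne_zero μ hv]
  have hm : Measurable fun x => (gaussianPDFReal μ v x).toNNReal :=
    (measurable_gaussianPDFReal μ v).real_toNNReal
  have h2 : volume.withDensity (gaussianPDF μ v)
      = volume.withDensity (fun x => ((gaussianPDFReal μ v x).toNNReal : ℝ≥0∞)) := rfl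
  rw [h2, integrable_withDensity_iff_integrable_smul hm]
  have h3 : (fun x => (gaussianPDFReal μ v x).toNNReal • f x) = fun x => gaussianPDFReal μ v x * f x := by
    funext x
    rw [NNReal.smul_def, smul_eq_mul, Real.coe_toNNReal _ (gaussianPDFReal_nonneg μ v x)]
  rw [h3]


lemma pdf0_eq {v : ℝ≥0} (y : ℝ) :
    gaussianPDFReal 0 v y = (√(2 * π * v))⁻¹ * rexp (-(2 * (v:ℝ))⁻¹ * y ^ 2) := by
  simp only [gaussianPDFReal, sub_zero]
  congr 1
  rw [neg_div, div_eq_mul_inv, neg_mul, mul_comm]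

lemma K1 {b : ℝ} (hb : 0 < b) : ∫ y : ℝ, y * rexp (-b * y ^ 2) = 0 := by
  set f : ℝ → ℝ := fun y => y * rexp (-b * y ^ 2) with hf
  have hodd : ∀ x : ℝ, f (-x) = - f x := by
    intro x; simp only [f, neg_sq]; ring
  have h1 : ∫ y, f y = ∫ y, f (-y) := by
    conv_lhs => rw [← Measure.map_neg_eq_self (volume : Measure ℝ)]
    exact MeasurableEmbedding.integral_map (Homeomorph.neg ℝ).measurableEmbedding f
  have h2 : ∫ y, f (-y) = - ∫ y, f y := by
    simp_rw [hodd]; exact integral_neg f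
  linarith [h1, h2]

lemma K2 {b : ℝ} (hb : 0 < b) :
    ∫ y : ℝ, y ^ 2 * rexp (-b * y ^ 2) = b ^ (-(3:ℝ)/2) * (1/2) * √π := by
  have habs : (fun y : ℝ => y ^ 2 * rexp (-b * y ^ 2))
      = fun y : ℝ => |y| ^ 2 * rexp (-b * |y| ^ 2) := by
    funext y; rw [sq_abs]
  rw [habs, integral_comp_abs (f := fun y : ℝ => y ^ 2 * rexp (-b * y ^ 2))]
  have h1 : ∫ y in Set.Ioi (0:ℝ), y ^ 2 * rexp (-b * y ^ 2)
      = ∫ y in Set.Ioi (0:ℝ), y ^ (2:ℝ) * rexp (-b * y ^ (2:ℝ)) := by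
    refine setIntegral_congr_fun measurableSet_Ioi (fun x hx => ?_)
    rw [show ((2:ℝ) = ((2:ℕ):ℝ)) by norm_num, Real.rpow_natCast]
  rw [h1, integral_rpow_mul_exp_neg_mul_rpow two_pos (by norm_num) hb]
  rw [show ((2:ℝ)+1)/2 = 1/2 + 1 by norm_num, Real.Gamma_add_one (by norm_num),
    Real.Gamma_one_half_eq]
  ring_nf


variable {v : ℝ≥0}

lemma vpos (hv : v ≠ 0) : (0:ℝ) < v := by
  exact_mod_cast pos_iff_ne_zero.mpr hv

lemma c_int1 (hv : v ≠ 0) : Integrable (fun y => gaussianPDFReal 0 v y * y) := by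
  have hb : (0:ℝ) < (2*(v:ℝ))⁻¹ := by have := vpos hv; positivity
  have h1 : (fun y : ℝ => gaussianPDFReal 0 v y * y)
      = fun y => (√(2*π*(v:ℝ)))⁻¹ * (y * rexp (-(2*(v:ℝ))⁻¹ * y^2)) := by
    funext y; rw [pdf0_eq]; ring
  rw [h1]
  exact (integrable_mul_exp_neg_mul_sq hb).const_mul _

lemma c_int2 (hv : v ≠ 0) : Integrable (fun y => gaussianPDFReal 0 v y * y ^ 2) := by
  have hb : (0:ℝ) < (2*(v:ℝ))⁻¹ := by have := vpos hv; positivity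
  have h1 : (fun y : ℝ => gaussianPDFReal 0 v y * y ^ 2)
      = fun y => (√(2*π*(v:ℝ)))⁻¹ * (y ^ 2 * rexp (-(2*(v:ℝ))⁻¹ * y^2)) := by
    funext y; rw [pdf0_eq]; ring
  rw [h1]
  refine Integrable.const_mul ?_ _
  have h2 := integrable_rpow_mul_exp_neg_mul_sq hb (s := 2) (by norm_num)
  refine h2.congr (Filter.Eventually.of_forall fun y => ?_)
  norm_num [show ((2:ℝ) = ((2:ℕ):ℝ)) from by norm_num, Real.rpow_natCast]

lemma c_m1 (hv : v ≠ 0) : ∫ y, gaussianPDFReal 0 v y * y = 0 := by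
  have hb : (0:ℝ) < (2*(v:ℝ))⁻¹ := by have := vpos hv; positivity
  have h1 : (fun y : ℝ => gaussianPDFReal 0 v y * y)
      = fun y => (√(2*π*(v:ℝ)))⁻¹ * (y * rexp (-(2*(v:ℝ))⁻¹ * y^2)) := by
    funext y; rw [pdf0_eq]; ring
  rw [h1, integral_const_mul, K1 hb, mul_zero]

lemma c_m2 (hv : v ≠ 0) : ∫ y, gaussianPDFReal 0 v y * y ^ 2 = v := by
  have hv' := vpos hv
  have hb : (0:ℝ) < (2*(v:ℝ))⁻¹ := by positivity
  have h1 : (fun y : ℝ => gaussianPDFReal 0 v y * y ^ 2)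
      = fun y => (√(2*π*(v:ℝ)))⁻¹ * (y ^ 2 * rexp (-(2*(v:ℝ))⁻¹ * y^2)) := by
    funext y; rw [pdf0_eq]; ring
  rw [h1, integral_const_mul, K2 hb]
  have e1 : ((2*(v:ℝ))⁻¹ : ℝ) ^ (-(3:ℝ)/2) = (2*(v:ℝ)) ^ ((3:ℝ)/2) := by
    rw [neg_div, Real.inv_rpow (by positivity), Real.rpow_neg (by positivity), inv_inv]
  have e2 : (2*(v:ℝ)) ^ ((3:ℝ)/2) = (2*(v:ℝ)) * √(2*(v:ℝ)) := by
    rw [show (3:ℝ)/2 = 1 + 1/2 by norm_num, Real.rpow_add (by positivity), Real.rpow_one,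
      ← Real.sqrt_eq_rpow]
  have e3 : √(2*π*(v:ℝ)) = √(2*(v:ℝ)) * √π := by
    rw [show 2*π*(v:ℝ) = (2*(v:ℝ))*π by ring, Real.sqrt_mul (by positivity)]
  rw [e1, e2, e3]
  have hs : (0:ℝ) < √(2*(v:ℝ)) := Real.sqrt_pos.mpr (by positivity)
  have hp : (0:ℝ) < √π := Real.sqrt_pos.mpr Real.pi_pos
  field_simp


lemma shift_eq (μ : ℝ) (f : ℝ → ℝ) :
    ∫ x, gaussianPDFReal μ v x * f x = ∫ y, gaussianPDFReal 0 v y * f (y + μ) := by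
  have h : ∀ x : ℝ, gaussianPDFReal μ v x * f x
      = (fun y => gaussianPDFReal 0 v y * f (y + μ)) (x - μ) := by
    intro x
    simp only [sub_add_cancel]
    rw [gaussianPDFReal_sub, zero_add]
  simp_rw [h]
  exact integral_sub_right_eq_self (fun y => gaussianPDFReal 0 v y * f (y + μ)) μ

lemma shift_int (μ : ℝ) (f : ℝ → ℝ)
    (h : Integrable (fun y => gaussianPDFReal 0 v y * f (y + μ))) :
    Integrable (fun x => gaussianPDFReal μ v x * f x) := by
  have h2 := h.comp_sub_right μ
  refine h2.congr (Filter.Eventually.of_forall fun x => ?_)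
  simp only [sub_add_cancel]
  rw [gaussianPDFReal_sub, zero_add]

lemma G_int1 (μ : ℝ) (hv : v ≠ 0) : Integrable (fun x => x) (gaussianReal μ v) := by
  rw [integrable_gaussianReal_iff μ hv]
  refine shift_int μ _ ?_
  have : (fun y => gaussianPDFReal 0 v y * (y + μ))
      = fun y => gaussianPDFReal 0 v y * y + μ * gaussianPDFReal 0 v y := by
    funext y; ring
  rw [this]
  exact (c_int1 hv).add ((integrable_gaussianPDFReal 0 v).const_mul μ)

lemma G_int2 (μ : ℝ) (hv : v ≠ 0) : Integrable (fun x => x ^ 2) (gaussianReal μ v) := by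
  rw [integrable_gaussianReal_iff μ hv]
  refine shift_int μ _ ?_
  have : (fun y => gaussianPDFReal 0 v y * (y + μ) ^ 2)
      = fun y => (gaussianPDFReal 0 v y * y ^ 2 + (2*μ) * (gaussianPDFReal 0 v y * y))
          + μ^2 * gaussianPDFReal 0 v y := by
    funext y; ring
  rw [this]
  exact ((c_int2 hv).add ((c_int1 hv).const_mul _)).add
    ((integrable_gaussianPDFReal 0 v).const_mul _)

lemma G_m1 (μ : ℝ) (hv : v ≠ 0) : ∫ x, x ∂gaussianReal μ v = μ := by
  rw [integral_gaussianReal_eq μ hv, shift_eq μ]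
  have : (fun y => gaussianPDFReal 0 v y * (y + μ))
      = fun y => gaussianPDFReal 0 v y * y + μ * gaussianPDFReal 0 v y := by
    funext y; ring
  have h1 : Integrable (fun y => μ * gaussianPDFReal 0 v y) :=
    (integrable_gaussianPDFReal 0 v).const_mul μ
  rw [this, integral_add (c_int1 hv) h1, c_m1 hv, integral_const_mul,
    integral_gaussianPDFReal_eq_one 0 hv]
  ring

lemma G_m2 (μ : ℝ) (hv : v ≠ 0) : ∫ x, x ^ 2 ∂gaussianReal μ v = μ ^ 2 + v := by
  rw [integral_gaussianReal_eq μ hv, shift_eq μ]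
  have : (fun y => gaussianPDFReal 0 v y * (y + μ) ^ 2)
      = fun y => (gaussianPDFReal 0 v y * y ^ 2 + (2*μ) * (gaussianPDFReal 0 v y * y))
          + μ^2 * gaussianPDFReal 0 v y := by
    funext y; ring
  have h1 : Integrable (fun y => (2*μ) * (gaussianPDFReal 0 v y * y)) :=
    (c_int1 hv).const_mul _
  have h2 : Integrable (fun y => gaussianPDFReal 0 v y * y ^ 2 +
      (2*μ) * (gaussianPDFReal 0 v y * y)) := (c_int2 hv).add h1
  have h3 : Integrable (fun y => μ^2 * gaussianPDFReal 0 v y) :=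
    (integrable_gaussianPDFReal 0 v).const_mul _
  rw [this, integral_add h2 h3, integral_add (c_int2 hv) h1, c_m2 hv, integral_const_mul,
    integral_const_mul, c_m1 hv, integral_gaussianPDFReal_eq_one 0 hv]
  ring

lemma G_sq_int (a μ : ℝ) (hv : v ≠ 0) :
    Integrable (fun t => (a - t) ^ 2) (gaussianReal μ v) := by
  have h1 : Integrable (fun t : ℝ => (-(2*a)) * t) (gaussianReal μ v) :=
    (G_int1 μ hv).const_mul _
  have : (fun t : ℝ => (a - t) ^ 2)
      = fun t => (t ^ 2 + (-(2*a)) * t) + a ^ 2 := by funext t; ring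
  rw [this]
  exact ((G_int2 μ hv).add h1).add (integrable_const _)

lemma G_sq (a μ : ℝ) (hv : v ≠ 0) :
    ∫ t, (a - t) ^ 2 ∂gaussianReal μ v = (a - μ) ^ 2 + v := by
  have h : (fun t : ℝ => (a - t) ^ 2)
      = fun t => (t ^ 2 + (-(2*a)) * t) + a ^ 2 := by funext t; ring
  have h1 : Integrable (fun t : ℝ => (-(2*a)) * t) (gaussianReal μ v) :=
    (G_int1 μ hv).const_mul _
  have h2 : Integrable (fun t : ℝ => t ^ 2 + (-(2*a)) * t) (gaussianReal μ v) :=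
    (G_int2 μ hv).add h1
  rw [h, integral_add h2 (integrable_const _),
    integral_add (G_int2 μ hv) h1, integral_const_mul,
    G_m1 μ hv, G_m2 μ hv, integral_const]
  simp [measure_univ]
  ring

lemma G_mul_int (μ : ℝ) (hv : v ≠ 0) :
    Integrable (fun t : ℝ => t * t) (gaussianReal μ v) := by
  have : (fun t : ℝ => t * t) = fun t => t ^ 2 := by funext t; ring
  rw [this]; exact G_int2 μ hv

lemma G_mul (μ : ℝ) (hv : v ≠ 0) :
    ∫ t, t * t ∂gaussianReal μ v = μ * μ + v := by
  have : (fun t : ℝ => t * t) = fun t => t ^ 2 := by funext t; ring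
  rw [this, G_m2 μ hv]; ring


section PiHelp

variable {ι E : Type*} [Fintype ι] [DecidableEq ι] [MeasurableSpace E]
variable (μ : ι → Measure E) [∀ i, IsProbabilityMeasure (μ i)]

lemma pi_prod_integral (f : ι → E → ℝ) :
    ∫ x : ι → E, ∏ i, f i (x i) ∂Measure.pi μ = ∏ i, ∫ y, f i y ∂μ i := by
  exact MeasureTheory.integral_fintype_prod_eq_prod (E := fun _ : ι => E) f (μ := μ)

lemma pi_prod_integrable {f : ι → E → ℝ} (hf : ∀ i, Integrable (f i) (μ i)) :
    Integrable (fun x : ι → E => ∏ i, f i (x i)) (Measure.pi μ) := by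
  exact MeasureTheory.Integrable.fintype_prod_dep (E := fun _ : ι => E) (f := f) (μ := μ) hf

variable (i : ι) (f : E → ℝ)

private def g1 (i : ι) (f : E → ℝ) : ι → E → ℝ := fun k => if k = i then f else fun _ => 1


lemma g1_prod (x : ι → E) : ∏ k, g1 i f k (x k) = f (x i) := by
  rw [Finset.prod_eq_single i]
  · simp [g1]
  · intro b _ hb; simp [g1, hb]
  · simp

lemma integral_eval : ∫ x : ι → E, f (x i) ∂Measure.pi μ = ∫ y, f y ∂μ i := by
  simp_rw [← g1_prod i f]
  rw [pi_prod_integral μ (g1 i f), Finset.prod_eq_single i]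
  · simp [g1]
  · intro b _ hb; simp [g1, hb]
  · simp

lemma integrable_eval (hf : Integrable f (μ i)) :
    Integrable (fun x : ι → E => f (x i)) (Measure.pi μ) := by
  have h : ∀ k, Integrable (g1 i f k) (μ k) := by
    intro k
    by_cases hk : k = i
    · subst hk; simpa [g1] using hf
    · simpa [g1, hk] using (integrable_const (1:ℝ) (μ := μ k))
  have := pi_prod_integrable μ h
  refine this.congr (Filter.Eventually.of_forall fun x => ?_)
  exact g1_prod i f x

variable (j : ι) (g : E → ℝ)

private def g2 (i j : ι) (f g : E → ℝ) : ι → E → ℝ :=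
  fun k => if k = i then f else if k = j then g else fun _ => 1

lemma g2_prod (hij : i ≠ j) (x : ι → E) :
    ∏ k, g2 i j f g k (x k) = f (x i) * g (x j) := by
  rw [← Finset.mul_prod_erase Finset.univ _ (Finset.mem_univ i)]
  have hj : j ∈ Finset.univ.erase i := Finset.mem_erase.2 ⟨hij.symm, Finset.mem_univ j⟩
  rw [← Finset.mul_prod_erase _ _ hj]
  have h1 : ∏ k ∈ (Finset.univ.erase i).erase j, g2 i j f g k (x k) = 1 := by
    refine Finset.prod_eq_one fun k hk => ?_
    have hki : k ≠ i := Finset.ne_of_mem_erase (Finset.mem_of_mem_erase hk)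
    have hkj : k ≠ j := Finset.ne_of_mem_erase hk
    simp [g2, hki, hkj]
  rw [h1]
  simp [g2, hij, hij.symm]

lemma integral_eval2 (hij : i ≠ j) :
    ∫ x : ι → E, f (x i) * g (x j) ∂Measure.pi μ = (∫ y, f y ∂μ i) * ∫ y, g y ∂μ j := by
  simp_rw [← g2_prod i f j g hij]
  rw [pi_prod_integral μ (g2 i j f g)]
  rw [← Finset.mul_prod_erase Finset.univ _ (Finset.mem_univ i)]
  have hj : j ∈ Finset.univ.erase i := Finset.mem_erase.2 ⟨hij.symm, Finset.mem_univ j⟩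
  rw [← Finset.mul_prod_erase _ _ hj]
  have h1 : ∏ k ∈ (Finset.univ.erase i).erase j, ∫ y, g2 i j f g k y ∂μ k = 1 := by
    refine Finset.prod_eq_one fun k hk => ?_
    have hki : k ≠ i := Finset.ne_of_mem_erase (Finset.mem_of_mem_erase hk)
    have hkj : k ≠ j := Finset.ne_of_mem_erase hk
    simp [g2, hki, hkj]
  rw [h1]
  have h2 : ∫ y, g2 i j f g i y ∂μ i = ∫ y, f y ∂μ i := by simp [g2]
  have h3 : ∫ y, g2 i j f g j y ∂μ j = ∫ y, g y ∂μ j := by simp [g2, hij.symm]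
  rw [h2, h3]
  ring

lemma integrable_eval2 (hij : i ≠ j) (hf : Integrable f (μ i)) (hg : Integrable g (μ j)) :
    Integrable (fun x : ι → E => f (x i) * g (x j)) (Measure.pi μ) := by
  have h : ∀ k, Integrable (g2 i j f g k) (μ k) := by
    intro k
    by_cases hki : k = i
    · subst hki; simpa [g2] using hf
    · by_cases hkj : k = j
      · subst hkj; simpa [g2, hki] using hg
      · simpa [g2, hki, hkj] using (integrable_const (1:ℝ) (μ := μ k))
  have := pi_prod_integrable μ h
  refine this.congr (Filter.Eventually.of_forall fun x => ?_)
  exact g2_prod i f j g hij x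

end PiHelp

section Core

variable {Ω : Type*} [MeasurableSpace Ω] (Q : Measure Ω) [IsProbabilityMeasure Q]
variable {ι : Type*} [Fintype ι] [DecidableEq ι]

lemma core (hc : 0 < Fintype.card ι) (X : ι → Ω → ℝ) (a v : ℝ)
    (hmom : ∀ p q, ∫ ω, X p ω * X q ω ∂Q = a * a + if p = q then v else 0)
    (h1 : ∀ p, ∫ ω, X p ω ∂Q = a)
    (hi1 : ∀ p, Integrable (X p) Q)
    (hi2 : ∀ p q, Integrable (fun ω => X p ω * X q ω) Q) :
    Integrable (fun ω => ((Fintype.card ι : ℝ)⁻¹ * ∑ p, X p ω - a) ^ 2 + v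
      - (Fintype.card ι : ℝ)⁻¹ * ∑ p, ((Fintype.card ι : ℝ)⁻¹ * ∑ q, X q ω - X p ω) ^ 2) Q
    ∧ ∫ ω, (((Fintype.card ι : ℝ)⁻¹ * ∑ p, X p ω - a) ^ 2 + v
      - (Fintype.card ι : ℝ)⁻¹ * ∑ p, ((Fintype.card ι : ℝ)⁻¹ * ∑ q, X q ω - X p ω) ^ 2) ∂Q
      = 2 * v / (Fintype.card ι : ℝ) := by
  set c : ℝ := (Fintype.card ι : ℝ) with hcdef
  have hc0 : c ≠ 0 := by
    simp only [hcdef]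
    exact_mod_cast hc.ne'
  have hkey : (fun ω => ((c:ℝ)⁻¹ * ∑ p, X p ω - a) ^ 2 + v
      - c⁻¹ * ∑ p, (c⁻¹ * ∑ q, X q ω - X p ω) ^ 2)
      = fun ω => (2 * c⁻¹ * c⁻¹) * (∑ p, ∑ q, X p ω * X q ω)
          - (2 * a * c⁻¹) * (∑ p, X p ω) + (a ^ 2 + v)
          - c⁻¹ * (∑ p, X p ω * X p ω) := by
    funext ω
    set S : ℝ := ∑ p, X p ω with hS
    have hS2 : S * S = ∑ p, ∑ q, X p ω * X q ω := by
      rw [hS, Finset.sum_mul_sum]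
    have hsum : ∑ p, (c⁻¹ * S - X p ω) ^ 2
        = c * ((c⁻¹ * S) ^ 2) - 2 * (c⁻¹ * S) * S + ∑ p, X p ω * X p ω := by
      have h1 : ∀ p ∈ Finset.univ, (c⁻¹ * S - X p ω) ^ 2
          = (c⁻¹ * S) ^ 2 - 2 * (c⁻¹ * S) * X p ω + X p ω * X p ω := by
        intro p _; ring
      rw [Finset.sum_congr rfl h1]
      rw [Finset.sum_add_distrib, Finset.sum_sub_distrib, Finset.sum_const, ← Finset.mul_sum,
        Finset.card_univ, nsmul_eq_mul, ← hS, ← hcdef]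
    rw [hsum, ← hS2]
    field_simp
    ring
  have hI1 : Integrable (fun ω => ∑ p, X p ω) Q :=
    integrable_finset_sum _ (fun p _ => hi1 p)
  have hI2 : Integrable (fun ω => ∑ p, ∑ q, X p ω * X q ω) Q :=
    integrable_finset_sum _ (fun p _ => integrable_finset_sum _ (fun q _ => hi2 p q))
  have hI3 : Integrable (fun ω => ∑ p, X p ω * X p ω) Q :=
    integrable_finset_sum _ (fun p _ => hi2 p p)
  have hA : Integrable (fun ω => (2 * c⁻¹ * c⁻¹) * (∑ p, ∑ q, X p ω * X q ω)) Q :=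
    hI2.const_mul _
  have hB : Integrable (fun ω => (2 * a * c⁻¹) * (∑ p, X p ω)) Q := hI1.const_mul _
  have hAB : Integrable (fun ω => (2 * c⁻¹ * c⁻¹) * (∑ p, ∑ q, X p ω * X q ω)
      - (2 * a * c⁻¹) * (∑ p, X p ω)) Q := hA.sub hB
  have hABc : Integrable (fun ω => (2 * c⁻¹ * c⁻¹) * (∑ p, ∑ q, X p ω * X q ω)
      - (2 * a * c⁻¹) * (∑ p, X p ω) + (a ^ 2 + v)) Q := hAB.add (integrable_const _)
  have hC : Integrable (fun ω => c⁻¹ * (∑ p, X p ω * X p ω)) Q := hI3.const_mul _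
  constructor
  · rw [hkey]; exact hABc.sub hC
  rw [hkey, integral_sub hABc hC, integral_add hAB (integrable_const _),
    integral_sub hA hB, integral_const_mul, integral_const_mul, integral_const_mul,
    integral_const]
  have e1 : ∫ ω, ∑ p, X p ω ∂Q = c * a := by
    rw [integral_finset_sum _ (fun p _ => hi1 p)]
    rw [Finset.sum_congr rfl (fun p _ => h1 p), Finset.sum_const, Finset.card_univ,
      nsmul_eq_mul, hcdef]
  have e2 : ∫ ω, ∑ p, ∑ q, X p ω * X q ω ∂Q = c * (c * (a * a) + v) := by
    rw [integral_finset_sum _ (fun p _ => integrable_finset_sum _ (fun q _ => hi2 p q))]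
    have h : ∀ p ∈ Finset.univ, (∫ ω, ∑ q, X p ω * X q ω ∂Q) = c * (a * a) + v := by
      intro p _
      rw [integral_finset_sum _ (fun q _ => hi2 p q),
        Finset.sum_congr rfl (fun q _ => hmom p q), Finset.sum_add_distrib,
        Finset.sum_const, Finset.card_univ, nsmul_eq_mul, Finset.sum_ite_eq,
        if_pos (Finset.mem_univ p), ← hcdef]
    rw [Finset.sum_congr rfl h, Finset.sum_const, Finset.card_univ, nsmul_eq_mul, ← hcdef]
  have e3 : ∫ ω, ∑ p, X p ω * X p ω ∂Q = c * (a * a + v) := by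
    rw [integral_finset_sum _ (fun p _ => hi2 p p)]
    have h : ∀ p ∈ Finset.univ, (∫ ω, X p ω * X p ω ∂Q) = a * a + v := by
      intro p _; rw [hmom p p]; simp
    rw [Finset.sum_congr rfl h, Finset.sum_const, Finset.card_univ, nsmul_eq_mul, ← hcdef]
  rw [e1, e2, e3]
  simp only [probReal_univ, one_smul]
  field_simp
  ring

end Core

section App

variable {d : ℕ} (μ0 : Fin d → ℝ) {v : ℝ≥0}

lemma P_m1 (hv : v ≠ 0) (j : Fin d) :
    ∫ z : Fin d → ℝ, z j ∂Measure.pi (fun j => gaussianReal (μ0 j) v) = μ0 j := by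
  have h := integral_eval (fun j => gaussianReal (μ0 j) v) j (fun t => t)
  rw [G_m1 (μ0 j) hv] at h
  exact h

lemma P_m2 (hv : v ≠ 0) (j : Fin d) :
    ∫ z : Fin d → ℝ, z j * z j ∂Measure.pi (fun j => gaussianReal (μ0 j) v)
      = μ0 j * μ0 j + v := by
  have h := integral_eval (fun j => gaussianReal (μ0 j) v) j (fun t => t * t)
  rw [G_mul (μ0 j) hv] at h
  exact h

lemma P_int1 (hv : v ≠ 0) (j : Fin d) :
    Integrable (fun z : Fin d → ℝ => z j) (Measure.pi (fun j => gaussianReal (μ0 j) v)) :=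
  integrable_eval (fun j => gaussianReal (μ0 j) v) j (fun t => t) (G_int1 (μ0 j) hv)

lemma P_int2 (hv : v ≠ 0) (j : Fin d) :
    Integrable (fun z : Fin d → ℝ => z j * z j)
      (Measure.pi (fun j => gaussianReal (μ0 j) v)) :=
  integrable_eval (fun j => gaussianReal (μ0 j) v) j (fun t => t * t) (G_mul_int (μ0 j) hv)

lemma P_sq (hv : v ≠ 0) (a : ℝ) (j : Fin d) :
    ∫ z : Fin d → ℝ, (a - z j) ^ 2 ∂Measure.pi (fun j => gaussianReal (μ0 j) v)
      = (a - μ0 j) ^ 2 + v := by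
  have h := integral_eval (fun j => gaussianReal (μ0 j) v) j (fun t => (a - t) ^ 2)
  rw [G_sq a (μ0 j) hv] at h
  exact h

lemma P_sq_int (hv : v ≠ 0) (a : ℝ) (j : Fin d) :
    Integrable (fun z : Fin d → ℝ => (a - z j) ^ 2)
      (Measure.pi (fun j => gaussianReal (μ0 j) v)) :=
  integrable_eval (fun j => gaussianReal (μ0 j) v) j (fun t => (a - t) ^ 2)
    (G_sq_int a (μ0 j) hv)

lemma L1 (hv : v ≠ 0) (w : Fin d → ℝ) :
    ∫ z : Fin d → ℝ, ∑ j, (w j - z j) ^ 2 ∂Measure.pi (fun j => gaussianReal (μ0 j) v)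
      = ∑ j, ((w j - μ0 j) ^ 2 + (v:ℝ)) := by
  rw [integral_finset_sum _ (fun j _ => P_sq_int μ0 hv (w j) j)]
  exact Finset.sum_congr rfl fun j _ => P_sq μ0 hv (w j) j

-- centralized sample space moments
variable {m : ℕ}

lemma C_m1 (hv : v ≠ 0) (p : Fin m) (j : Fin d) :
    ∫ s : Fin m → Fin d → ℝ, s p j
      ∂Measure.pi (fun _ : Fin m => Measure.pi (fun j => gaussianReal (μ0 j) v)) = μ0 j := by
  have h := integral_eval (fun _ : Fin m => Measure.pi (fun j => gaussianReal (μ0 j) v)) p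
    (fun y => y j)
  rw [P_m1 μ0 hv j] at h
  exact h

lemma C_int1 (hv : v ≠ 0) (p : Fin m) (j : Fin d) :
    Integrable (fun s : Fin m → Fin d → ℝ => s p j)
      (Measure.pi (fun _ : Fin m => Measure.pi (fun j => gaussianReal (μ0 j) v))) :=
  integrable_eval (fun _ : Fin m => Measure.pi (fun j => gaussianReal (μ0 j) v)) p
    (fun y => y j) (P_int1 μ0 hv j)

lemma C_mom (hv : v ≠ 0) (p q : Fin m) (j : Fin d) :
    ∫ s : Fin m → Fin d → ℝ, s p j * s q j
      ∂Measure.pi (fun _ : Fin m => Measure.pi (fun j => gaussianReal (μ0 j) v))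
      = μ0 j * μ0 j + if p = q then (v:ℝ) else 0 := by
  by_cases hpq : p = q
  · subst hpq
    have h := integral_eval (fun _ : Fin m => Measure.pi (fun j => gaussianReal (μ0 j) v)) p
      (fun y => y j * y j)
    rw [P_m2 μ0 hv j] at h
    simpa using h
  · have h := integral_eval2 (fun _ : Fin m => Measure.pi (fun j => gaussianReal (μ0 j) v)) p
      (fun y => y j) q (fun y => y j) hpq
    rw [P_m1 μ0 hv j] at h
    simp only [hpq, if_false, add_zero]
    exact h

lemma C_mom_int (hv : v ≠ 0) (p q : Fin m) (j : Fin d) :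
    Integrable (fun s : Fin m → Fin d → ℝ => s p j * s q j)
      (Measure.pi (fun _ : Fin m => Measure.pi (fun j => gaussianReal (μ0 j) v))) := by
  by_cases hpq : p = q
  · subst hpq
    exact integrable_eval (fun _ : Fin m => Measure.pi (fun j => gaussianReal (μ0 j) v)) p
      (fun y => y j * y j) (P_int2 μ0 hv j)
  · exact integrable_eval2 (fun _ : Fin m => Measure.pi (fun j => gaussianReal (μ0 j) v)) p
      (fun y => y j) q (fun y => y j) hpq (P_int1 μ0 hv j) (P_int1 μ0 hv j)

-- distributed sample space moments
variable {n K : ℕ}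

lemma D_m1 (hv : v ≠ 0) (p : Fin K × Fin n) (j : Fin d) :
    ∫ s : Fin K → Fin n → Fin d → ℝ, s p.1 p.2 j
      ∂Measure.pi (fun _ : Fin K => Measure.pi (fun _ : Fin n =>
        Measure.pi (fun j => gaussianReal (μ0 j) v))) = μ0 j := by
  have h := integral_eval (fun _ : Fin K => Measure.pi (fun _ : Fin n =>
    Measure.pi (fun j => gaussianReal (μ0 j) v))) p.1 (fun y => y p.2 j)
  rw [C_m1 μ0 hv p.2 j] at h
  exact h

lemma D_int1 (hv : v ≠ 0) (p : Fin K × Fin n) (j : Fin d) :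
    Integrable (fun s : Fin K → Fin n → Fin d → ℝ => s p.1 p.2 j)
      (Measure.pi (fun _ : Fin K => Measure.pi (fun _ : Fin n =>
        Measure.pi (fun j => gaussianReal (μ0 j) v)))) :=
  integrable_eval (fun _ : Fin K => Measure.pi (fun _ : Fin n =>
    Measure.pi (fun j => gaussianReal (μ0 j) v))) p.1 (fun y => y p.2 j)
    (C_int1 μ0 hv p.2 j)

lemma D_mom (hv : v ≠ 0) (p q : Fin K × Fin n) (j : Fin d) :
    ∫ s : Fin K → Fin n → Fin d → ℝ, s p.1 p.2 j * s q.1 q.2 j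
      ∂Measure.pi (fun _ : Fin K => Measure.pi (fun _ : Fin n =>
        Measure.pi (fun j => gaussianReal (μ0 j) v)))
      = μ0 j * μ0 j + if p = q then (v:ℝ) else 0 := by
  obtain ⟨k, i⟩ := p
  obtain ⟨k', i'⟩ := q
  by_cases hk : k = k'
  · subst hk
    have h := integral_eval (fun _ : Fin K => Measure.pi (fun _ : Fin n =>
      Measure.pi (fun j => gaussianReal (μ0 j) v))) k (fun y => y i j * y i' j)
    rw [C_mom μ0 hv i i' j] at h
    simp only [Prod.mk.injEq, true_and]
    exact h
  · have h := integral_eval2 (fun _ : Fin K => Measure.pi (fun _ : Fin n =>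
      Measure.pi (fun j => gaussianReal (μ0 j) v))) k (fun y => y i j) k' (fun y => y i' j) hk
    rw [C_m1 μ0 hv i j, C_m1 μ0 hv i' j] at h
    have hne : ((k, i) : Fin K × Fin n) ≠ (k', i') := by simp [hk]
    rw [if_neg hne, add_zero]
    exact h

lemma D_mom_int (hv : v ≠ 0) (p q : Fin K × Fin n) (j : Fin d) :
    Integrable (fun s : Fin K → Fin n → Fin d → ℝ => s p.1 p.2 j * s q.1 q.2 j)
      (Measure.pi (fun _ : Fin K => Measure.pi (fun _ : Fin n =>
        Measure.pi (fun j => gaussianReal (μ0 j) v)))) := by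
  obtain ⟨k, i⟩ := p
  obtain ⟨k', i'⟩ := q
  by_cases hk : k = k'
  · subst hk
    exact integrable_eval (fun _ : Fin K => Measure.pi (fun _ : Fin n =>
      Measure.pi (fun j => gaussianReal (μ0 j) v))) k (fun y => y i j * y i' j)
      (C_mom_int μ0 hv i i' j)
  · exact integrable_eval2 (fun _ : Fin K => Measure.pi (fun _ : Fin n =>
      Measure.pi (fun j => gaussianReal (μ0 j) v))) k (fun y => y i j) k' (fun y => y i' j) hk
      (C_int1 μ0 hv i j) (C_int1 μ0 hv i' j)

lemma central (hm : 0 < m) (hv : v ≠ 0) :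
    ∫ s : Fin m → Fin d → ℝ,
        ((∫ z, ∑ j : Fin d, (((m : ℝ)⁻¹ • ∑ p : Fin m, s p) j - z j) ^ 2
            ∂(Measure.pi fun j : Fin d => gaussianReal (μ0 j) v))
          - (1 / m : ℝ) * ∑ p : Fin m, ∑ j : Fin d,
              (((m : ℝ)⁻¹ • ∑ p' : Fin m, s p') j - s p j) ^ 2)
        ∂(Measure.pi fun _ : Fin m => (Measure.pi fun j : Fin d => gaussianReal (μ0 j) v))
      = 2 * (v:ℝ) * d / m := by
  have hcore := fun j : Fin d => core
    (Measure.pi fun _ : Fin m => (Measure.pi fun j : Fin d => gaussianReal (μ0 j) v))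
    (by simpa using hm : 0 < Fintype.card (Fin m))
    (fun p (s : Fin m → Fin d → ℝ) => s p j) (μ0 j) (v:ℝ)
    (fun p q => C_mom μ0 hv p q j) (fun p => C_m1 μ0 hv p j)
    (fun p => C_int1 μ0 hv p j) (fun p q => C_mom_int μ0 hv p q j)
  simp only [Fintype.card_fin] at hcore
  have hfun : (fun s : Fin m → Fin d → ℝ =>
      ((∫ z, ∑ j : Fin d, (((m : ℝ)⁻¹ • ∑ p : Fin m, s p) j - z j) ^ 2
          ∂(Measure.pi fun j : Fin d => gaussianReal (μ0 j) v))
        - (1 / m : ℝ) * ∑ p : Fin m, ∑ j : Fin d,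
            (((m : ℝ)⁻¹ • ∑ p' : Fin m, s p') j - s p j) ^ 2))
      = fun s : Fin m → Fin d → ℝ => ∑ j : Fin d,
          (((m:ℝ)⁻¹ * ∑ p, s p j - μ0 j) ^ 2 + (v:ℝ)
            - (m:ℝ)⁻¹ * ∑ p, ((m:ℝ)⁻¹ * ∑ q, s q j - s p j) ^ 2) := by
    funext s
    rw [L1 μ0 hv]
    simp only [Pi.smul_apply, Finset.sum_apply, smul_eq_mul, one_div]
    rw [Finset.sum_comm, Finset.mul_sum, ← Finset.sum_sub_distrib]
  rw [hfun]
  rw [integral_finset_sum _ (fun j _ => (hcore j).1)]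
  have hval : ∀ j ∈ (Finset.univ : Finset (Fin d)),
      (∫ s : Fin m → Fin d → ℝ,
        (((m:ℝ)⁻¹ * ∑ p, s p j - μ0 j) ^ 2 + (v:ℝ)
          - (m:ℝ)⁻¹ * ∑ p, ((m:ℝ)⁻¹ * ∑ q, s q j - s p j) ^ 2)
        ∂(Measure.pi fun _ : Fin m => (Measure.pi fun j : Fin d => gaussianReal (μ0 j) v)))
      = 2 * (v:ℝ) / (m:ℝ) := fun j _ => (hcore j).2
  rw [Finset.sum_congr rfl hval, Finset.sum_const, Finset.card_univ, Fintype.card_fin,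
    nsmul_eq_mul]
  ring

lemma distrib (hn : 0 < n) (hK : 0 < K) (hv : v ≠ 0) :
    ∫ s : Fin K → Fin n → Fin d → ℝ,
        ((∫ z, ∑ j : Fin d,
              (((K : ℝ)⁻¹ • ∑ k : Fin K, (n : ℝ)⁻¹ • ∑ i : Fin n, s k i) j - z j) ^ 2
            ∂(Measure.pi fun j : Fin d => gaussianReal (μ0 j) v))
          - (1 / (n * K) : ℝ) * ∑ k : Fin K, ∑ i : Fin n, ∑ j : Fin d,
              (((K : ℝ)⁻¹ • ∑ k' : Fin K, (n : ℝ)⁻¹ • ∑ i' : Fin n, s k' i') j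
                - s k i j) ^ 2)
        ∂(Measure.pi fun _ : Fin K => (Measure.pi fun _ : Fin n =>
          (Measure.pi fun j : Fin d => gaussianReal (μ0 j) v)))
      = 2 * (v:ℝ) * d / (n * K) := by
  have hcard : 0 < Fintype.card (Fin K × Fin n) := by simp [Fintype.card_prod, hn, hK]
  have hcore := fun j : Fin d => core
    (Measure.pi fun _ : Fin K => (Measure.pi fun _ : Fin n =>
      (Measure.pi fun j : Fin d => gaussianReal (μ0 j) v)))
    hcard
    (fun (p : Fin K × Fin n) (s : Fin K → Fin n → Fin d → ℝ) => s p.1 p.2 j) (μ0 j) (v:ℝ)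
    (fun p q => D_mom μ0 hv p q j) (fun p => D_m1 μ0 hv p j)
    (fun p => D_int1 μ0 hv p j) (fun p q => D_mom_int μ0 hv p q j)
  simp only [Fintype.card_prod, Fintype.card_fin, Nat.cast_mul] at hcore
  have hswap : ∀ F : Fin K → Fin n → Fin d → ℝ,
      (∑ k, ∑ i, ∑ j, F k i j) = ∑ j, ∑ k, ∑ i, F k i j := by
    intro F
    calc (∑ k, ∑ i, ∑ j, F k i j)
        = ∑ k, ∑ j, ∑ i, F k i j :=
          Finset.sum_congr rfl (fun k _ => Finset.sum_comm)
      _ = ∑ j, ∑ k, ∑ i, F k i j := Finset.sum_comm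
  have hfun : (fun s : Fin K → Fin n → Fin d → ℝ =>
      ((∫ z, ∑ j : Fin d,
            (((K : ℝ)⁻¹ • ∑ k : Fin K, (n : ℝ)⁻¹ • ∑ i : Fin n, s k i) j - z j) ^ 2
          ∂(Measure.pi fun j : Fin d => gaussianReal (μ0 j) v))
        - (1 / (n * K) : ℝ) * ∑ k : Fin K, ∑ i : Fin n, ∑ j : Fin d,
            (((K : ℝ)⁻¹ • ∑ k' : Fin K, (n : ℝ)⁻¹ • ∑ i' : Fin n, s k' i') j
              - s k i j) ^ 2))
      = fun s : Fin K → Fin n → Fin d → ℝ => ∑ j : Fin d,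
          ((((K:ℝ) * (n:ℝ))⁻¹ * ∑ p : Fin K × Fin n, s p.1 p.2 j - μ0 j) ^ 2 + (v:ℝ)
            - ((K:ℝ) * (n:ℝ))⁻¹ * ∑ p : Fin K × Fin n,
                (((K:ℝ) * (n:ℝ))⁻¹ * ∑ q : Fin K × Fin n, s q.1 q.2 j - s p.1 p.2 j) ^ 2) := by
    funext s
    rw [L1 μ0 hv]
    simp only [Pi.smul_apply, Finset.sum_apply, smul_eq_mul, one_div]
    have hW : ∀ j : Fin d, (K:ℝ)⁻¹ * ∑ k, ((n:ℝ)⁻¹ * ∑ i, s k i j)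
        = ((K:ℝ) * (n:ℝ))⁻¹ * ∑ p : Fin K × Fin n, s p.1 p.2 j := by
      intro j
      rw [← Finset.mul_sum, Fintype.sum_prod_type, mul_inv]
      ring
    simp only [hW]
    rw [hswap, Finset.mul_sum, ← Finset.sum_sub_distrib]
    refine Finset.sum_congr rfl fun j _ => ?_
    simp only [Fintype.sum_prod_type]
    ring
  rw [hfun]
  rw [integral_finset_sum _ (fun j _ => (hcore j).1)]
  have hval : ∀ j ∈ (Finset.univ : Finset (Fin d)),
      (∫ s : Fin K → Fin n → Fin d → ℝ,
        ((((K:ℝ) * (n:ℝ))⁻¹ * ∑ p : Fin K × Fin n, s p.1 p.2 j - μ0 j) ^ 2 + (v:ℝ)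
          - ((K:ℝ) * (n:ℝ))⁻¹ * ∑ p : Fin K × Fin n,
              (((K:ℝ) * (n:ℝ))⁻¹ * ∑ q : Fin K × Fin n, s q.1 q.2 j - s p.1 p.2 j) ^ 2)
        ∂(Measure.pi fun _ : Fin K => (Measure.pi fun _ : Fin n =>
          (Measure.pi fun j : Fin d => gaussianReal (μ0 j) v))))
      = 2 * (v:ℝ) / ((K:ℝ) * (n:ℝ)) := fun j _ => (hcore j).2
  rw [Finset.sum_congr rfl hval, Finset.sum_const, Finset.card_univ, Fintype.card_fin,
    nsmul_eq_mul]
  have hn0 : (n:ℝ) ≠ 0 := Nat.cast_ne_zero.mpr hn.ne'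
  have hK0 : (K:ℝ) ≠ 0 := Nat.cast_ne_zero.mpr hK.ne'
  field_simp

end App

end GaussGen

open MeasureTheory ProbabilityTheory
open scoped ENNReal NNReal

/-- **Exact expected generalization error for Gaussian mean estimation by sample
averaging.**  For `Z_1, …, Z_m` i.i.d. `N(μ, σ²I_d)` on `ℝ^d`, squared `ℓ²` loss
`ℓ(w, z) = ‖w − z‖₂² = ∑_j (w_j − z_j)²`, and the sample-mean algorithm
`W = (1/m) ∑_j Z_j`, the expected generalization error is exactly `2σ²d/m`.
In particular, in the distributed setting with `K` nodes each averaging `n` local samples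
and the aggregate model being the average of the node averages, it is `2σ²d/(nK)`. -/
theorem gaussian_mean_estimation_exact_generalization_error
    (d m n K : ℕ) (hm : 0 < m) (hn : 0 < n) (hK : 0 < K)
    (μ0 : Fin d → ℝ) (σ : ℝ≥0) (hσ : 0 < σ) :
    -- centralized: the sample mean of `m` i.i.d. samples
    (∫ s : Fin m → Fin d → ℝ,
        ((∫ z, ∑ j : Fin d, (((m : ℝ)⁻¹ • ∑ p : Fin m, s p) j - z j) ^ 2
            ∂(Measure.pi fun j : Fin d => gaussianReal (μ0 j) (σ ^ 2)))
          - (1 / m : ℝ) * ∑ p : Fin m, ∑ j : Fin d,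
              (((m : ℝ)⁻¹ • ∑ p' : Fin m, s p') j - s p j) ^ 2)
        ∂(Measure.pi fun _ : Fin m =>
          (Measure.pi fun j : Fin d => gaussianReal (μ0 j) (σ ^ 2)))
      = 2 * (σ : ℝ) ^ 2 * d / m)
    ∧
    -- distributed: `K` nodes each average `n` local samples, and the aggregate model is
    -- the average of the node averages
    (∫ s : Fin K → Fin n → Fin d → ℝ,
        ((∫ z, ∑ j : Fin d,
              (((K : ℝ)⁻¹ • ∑ k : Fin K, (n : ℝ)⁻¹ • ∑ i : Fin n, s k i) j - z j) ^ 2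
            ∂(Measure.pi fun j : Fin d => gaussianReal (μ0 j) (σ ^ 2)))
          - (1 / (n * K) : ℝ) * ∑ k : Fin K, ∑ i : Fin n, ∑ j : Fin d,
              (((K : ℝ)⁻¹ • ∑ k' : Fin K, (n : ℝ)⁻¹ • ∑ i' : Fin n, s k' i') j
                - s k i j) ^ 2)
        ∂(Measure.pi fun _ : Fin K => (Measure.pi fun _ : Fin n =>
          (Measure.pi fun j : Fin d => gaussianReal (μ0 j) (σ ^ 2))))
      = 2 * (σ : ℝ) ^ 2 * d / (n * K)) := by
  have hv : (σ ^ 2 : ℝ≥0) ≠ 0 := pow_ne_zero 2 (ne_of_gt hσ)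
  have hcast : ((σ ^ 2 : ℝ≥0) : ℝ) = (σ : ℝ) ^ 2 := by push_cast; ring
  constructor
  · have h := GaussGen.central (μ0 := μ0) (v := σ ^ 2) hm hv
    rw [hcast] at h
    exact h
  · have h := GaussGen.distrib (μ0 := μ0) (v := σ ^ 2) hn hK hv
    rw [hcast] at h
    exact h
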